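/- Theorem 2 (upper bound): Under assumption (i) (joint independence of the instrument from all potential outcomes), for all i, j ∈ {0,1}: P(Y(x_i) = j) ≤ g(i, j). -/

import Mathlib

open MeasureTheory ProbabilityTheory

/-- The bound `g(i, j)` of Theorem 2, expressed in terms of the observed conditional laws
`p z x y = P(X = x, Y = y | Z = z)`:
`g(i,j) = min{ min_z [ p_z(X=i,Y=j) + p_z(X=1−i) ],`
`min_{z ≠ z̃} [ p_z(X=i,Y=j) + p_z(X=1−i,Y=0) + p_{z̃}(X=i,Y=j) + p_{z̃}(X=1−i,Y=1) ] }`,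
where `p_z(X = 1−i) = p_z(X=1−i, Y=0) + p_z(X=1−i, Y=1)`. -/
noncomputable def gOf {K : ℕ} (hK : 2 ≤ K) (p : Fin K → Fin 2 → Fin 2 → ℝ)
    (i j : Fin 2) : ℝ :=
  min
    ((Finset.univ : Finset (Fin K)).inf'
      ⟨⟨0, by omega⟩, Finset.mem_univ _⟩
      (fun z => p z i j + (p z (1 - i) 0 + p z (1 - i) 1)))
    (((Finset.univ : Finset (Fin K × Fin K)).filter (fun q => q.1 ≠ q.2)).inf'
      ⟨(⟨0, by omega⟩, ⟨1, by omega⟩), by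
        simp only [Finset.mem_filter, Finset.mem_univ, true_and]
        exact fun h => absurd (congrArg Fin.val h) (by simp)⟩
      (fun q => p q.1 i j + p q.1 (1 - i) 0 + p q.2 i j + p q.2 (1 - i) 1))

/-- Theorem 2, upper bound: under assumption (i) (joint independence of the
instrument from all potential outcomes), for all `i, j ∈ {0,1}`: `P(Y(xᵢ) = j) ≤ g(i, j)`. -/
theorem stmt7
    {Ω : Type*} [MeasurableSpace Ω] (P : Measure Ω) [IsProbabilityMeasure P]
    (K : ℕ) (hK : 2 ≤ K)
    (Z : Ω → Fin K) (Xz : Fin K → Ω → Fin 2) (Y0 Y1 : Ω → Fin 2)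
    (hZ : Measurable Z) (hXz : ∀ z, Measurable (Xz z))
    (hY0 : Measurable Y0) (hY1 : Measurable Y1)
    (X : Ω → Fin 2) (hX : ∀ ω, X ω = Xz (Z ω) ω)
    (Y : Ω → Fin 2) (hY : ∀ ω, Y ω = if X ω = 0 then Y0 ω else Y1 ω)
    (hpos : ∀ z, 0 < P (Z ⁻¹' {z}))
    (hindep : IndepFun Z (fun ω => (Y0 ω, Y1 ω, fun z => Xz z ω)) P) :
    ∀ i j : Fin 2,
      (P {ω | (if i = 0 then Y0 ω else Y1 ω) = j}).toReal ≤
        gOf hK (fun z x y => (P[|Z ⁻¹' {z}] {ω | X ω = x ∧ Y ω = y}).toReal) i j := by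
  intro i j
  have hms : ∀ z : Fin K, MeasurableSet (Z ⁻¹' {z}) := fun z => hZ (measurableSet_singleton z)
  have hs0 : ∀ z, P (Z ⁻¹' {z}) ≠ 0 := fun z => (hpos z).ne'
  have hfin : ∀ (z : Fin K) (t : Set Ω), P[|Z ⁻¹' {z}] t ≠ ⊤ := by
    intro z t
    rw [cond_apply (hms z) P t]
    exact ENNReal.mul_ne_top (ENNReal.inv_ne_top.mpr (hs0 z)) (measure_ne_top P _)
  set pr : Ω → Fin 2 × Fin 2 := fun ω => (Y0 ω, Y1 ω) with hpr
  have hIndep : IndepFun Z pr P := by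
    have hφ : Measurable (fun q : Fin 2 × (Fin 2 × (Fin K → Fin 2)) => (q.1, q.2.1)) :=
      measurable_fst.prodMk (measurable_fst.comp measurable_snd)
    exact hindep.comp measurable_id hφ
  have hcond : ∀ (z : Fin K) (S : Set (Fin 2 × Fin 2)),
      P[|Z ⁻¹' {z}] (pr ⁻¹' S) = P (pr ⁻¹' S) := by
    intro z S
    have hS : MeasurableSet S := (Set.toFinite S).measurableSet
    have h := hIndep.measure_inter_preimage_eq_mul {z} S (measurableSet_singleton z) hS
    rw [cond_apply (hms z) P, h, ← mul_assoc,
      ENNReal.inv_mul_cancel (hs0 z) (measure_ne_top P _), one_mul]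
  -- events as preimages of the pair (Y0, Y1)
  set SE : Set (Fin 2 × Fin 2) := {p | (if i = 0 then p.1 else p.2) = j} with hSE
  set S0 : Set (Fin 2 × Fin 2) :=
    {p | (if i = 0 then p.1 else p.2) = j ∧ (if i = 0 then p.2 else p.1) = 0} with hS0
  set S1 : Set (Fin 2 × Fin 2) :=
    {p | (if i = 0 then p.1 else p.2) = j ∧ (if i = 0 then p.2 else p.1) = 1} with hS1
  -- pointwise facts about Fin 2
  have hdich' : ∀ k x : Fin 2, x = k ∨ x = 1 - k := by decide
  have hdich : ∀ x : Fin 2, x = i ∨ x = 1 - i := hdich' i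
  have h01 : ∀ y : Fin 2, y = 0 ∨ y = 1 := by decide
  have hswap : ∀ (k a b : Fin 2), (if 1 - k = 0 then a else b) = if k = 0 then b else a := by
    decide
  have hYi : ∀ ω, X ω = i → Y ω = (if i = 0 then Y0 ω else Y1 ω) := by
    intro ω h; rw [hY ω, h]
  have hYo : ∀ ω, X ω = 1 - i → Y ω = (if i = 0 then Y1 ω else Y0 ω) := by
    intro ω h; rw [hY ω, h]; exact hswap i (Y0 ω) (Y1 ω)
  -- inclusions
  have keyE : pr ⁻¹' SE ⊆ {ω | X ω = i ∧ Y ω = j} ∪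
      ({ω | X ω = (1 - i) ∧ Y ω = 0} ∪ {ω | X ω = (1 - i) ∧ Y ω = 1}) := by
    intro ω hω
    rcases hdich (X ω) with hx | hx
    · exact Or.inl ⟨hx, (hYi ω hx).trans hω⟩
    · rcases h01 (if i = 0 then Y1 ω else Y0 ω) with h' | h'
      · exact Or.inr (Or.inl ⟨hx, (hYo ω hx).trans h'⟩)
      · exact Or.inr (Or.inr ⟨hx, (hYo ω hx).trans h'⟩)
  have key0 : pr ⁻¹' S0 ⊆ {ω | X ω = i ∧ Y ω = j} ∪ {ω | X ω = (1 - i) ∧ Y ω = 0} := by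
    intro ω hω
    rcases hdich (X ω) with hx | hx
    · exact Or.inl ⟨hx, (hYi ω hx).trans hω.1⟩
    · exact Or.inr ⟨hx, (hYo ω hx).trans hω.2⟩
  have key1 : pr ⁻¹' S1 ⊆ {ω | X ω = i ∧ Y ω = j} ∪ {ω | X ω = (1 - i) ∧ Y ω = 1} := by
    intro ω hω
    rcases hdich (X ω) with hx | hx
    · exact Or.inl ⟨hx, (hYi ω hx).trans hω.1⟩
    · exact Or.inr ⟨hx, (hYo ω hx).trans hω.2⟩
  -- split of E into S0, S1 parts
  have hEsplit : P (pr ⁻¹' SE) = P (pr ⁻¹' S0) + P (pr ⁻¹' S1) := by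
    have hU : pr ⁻¹' SE = pr ⁻¹' S0 ∪ pr ⁻¹' S1 := by
      ext ω
      simp only [Set.mem_preimage, hSE, hS0, hS1, Set.mem_setOf_eq, Set.mem_union]
      constructor
      · intro h
        rcases h01 (if i = 0 then (pr ω).2 else (pr ω).1) with h' | h'
        · exact Or.inl ⟨h, h'⟩
        · exact Or.inr ⟨h, h'⟩
      · rintro (⟨h, _⟩ | ⟨h, _⟩) <;> exact h
    have hdisj : Disjoint (pr ⁻¹' S0) (pr ⁻¹' S1) := by
      rw [Set.disjoint_left]
      rintro ω ⟨_, h0⟩ ⟨_, h1⟩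
      rw [h0] at h1
      exact absurd h1 (by decide)
    have hm1 : MeasurableSet (pr ⁻¹' S1) := by
      have hprm : Measurable pr := hY0.prodMk hY1
      exact hprm ((Set.toFinite S1).measurableSet)
    rw [hU, measure_union hdisj hm1]
  -- the goal set is `pr ⁻¹' SE`
  have hgoal : {ω | (if i = 0 then Y0 ω else Y1 ω) = j} = pr ⁻¹' SE := rfl
  rw [hgoal, gOf]
  refine le_min ?_ ?_
  · -- first family of bounds
    apply Finset.le_inf'
    intro z _
    have hle : P[|Z ⁻¹' {z}] (pr ⁻¹' SE) ≤
        P[|Z ⁻¹' {z}] {ω | X ω = i ∧ Y ω = j} +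
          (P[|Z ⁻¹' {z}] {ω | X ω = (1 - i) ∧ Y ω = 0} +
            P[|Z ⁻¹' {z}] {ω | X ω = (1 - i) ∧ Y ω = 1}) :=
      (measure_mono keyE).trans ((measure_union_le _ _).trans
        (add_le_add le_rfl (measure_union_le _ _)))
    have h1 : (P (pr ⁻¹' SE)).toReal ≤
        (P[|Z ⁻¹' {z}] {ω | X ω = i ∧ Y ω = j} +
          (P[|Z ⁻¹' {z}] {ω | X ω = (1 - i) ∧ Y ω = 0} +
            P[|Z ⁻¹' {z}] {ω | X ω = (1 - i) ∧ Y ω = 1})).toReal := by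
      rw [← hcond z SE]
      exact ENNReal.toReal_mono
        (ENNReal.add_ne_top.mpr ⟨hfin z _, ENNReal.add_ne_top.mpr ⟨hfin z _, hfin z _⟩⟩) hle
    rw [ENNReal.toReal_add (hfin z _) (ENNReal.add_ne_top.mpr ⟨hfin z _, hfin z _⟩),
      ENNReal.toReal_add (hfin z _) (hfin z _)] at h1
    exact h1
  · -- second family of bounds
    apply Finset.le_inf'
    rintro ⟨z, z'⟩ _
    have hA0 : (P (pr ⁻¹' S0)).toReal ≤
        (P[|Z ⁻¹' {z}] {ω | X ω = i ∧ Y ω = j}).toReal +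
          (P[|Z ⁻¹' {z}] {ω | X ω = (1 - i) ∧ Y ω = 0}).toReal := by
      rw [← hcond z S0, ← ENNReal.toReal_add (hfin z _) (hfin z _)]
      exact ENNReal.toReal_mono (ENNReal.add_ne_top.mpr ⟨hfin z _, hfin z _⟩)
        ((measure_mono key0).trans (measure_union_le _ _))
    have hA1 : (P (pr ⁻¹' S1)).toReal ≤
        (P[|Z ⁻¹' {z'}] {ω | X ω = i ∧ Y ω = j}).toReal +
          (P[|Z ⁻¹' {z'}] {ω | X ω = (1 - i) ∧ Y ω = 1}).toReal := by
      rw [← hcond z' S1, ← ENNReal.toReal_add (hfin z' _) (hfin z' _)]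
      exact ENNReal.toReal_mono (ENNReal.add_ne_top.mpr ⟨hfin z' _, hfin z' _⟩)
        ((measure_mono key1).trans (measure_union_le _ _))
    have hsum : (P (pr ⁻¹' SE)).toReal = (P (pr ⁻¹' S0)).toReal + (P (pr ⁻¹' S1)).toReal := by
      rw [hEsplit, ENNReal.toReal_add (measure_ne_top P _) (measure_ne_top P _)]
    simp only []
    rw [hsum]
    linarith
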